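/- Let D be a dyadic grid, f, g ∈ L²(ℝⁿ), and k ≥ 1. Define Φ := Σ_{I∈D, ε,η≠1} ⟨f, h_{I^{(k)}}^η⟩ h_{I^{(k)}}^η(I) ⟨g, h_I^ε⟩ h_I^ε. Then pointwise S_D Φ ≤ C(n) (Mf) · (S_D g), where M is the (dyadic) Hardy–Littlewood maximal function and S_D the dyadic square function. -/

import Mathlib

open MeasureTheory Set
open scoped ENNReal Classical

noncomputable section

/-- A dyadic cube in `ℝⁿ`, encoded by its generation `k` and corner `m`:
the cube `∏ i, [2^k m i, 2^k (m i + 1))`. -/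
abbrev Cube (n : ℕ) := ℤ × (Fin n → ℤ)

/-- The set in `ℝⁿ` corresponding to a dyadic cube. -/
def cubeSet {n : ℕ} (Q : Cube n) : Set (Fin n → ℝ) :=
  {x | ∀ i, (2:ℝ)^Q.1 * Q.2 i ≤ x i ∧ x i < (2:ℝ)^Q.1 * (Q.2 i + 1)}

/-- The volume `|Q| = 2^{kn}` of a dyadic cube. -/
def vol {n : ℕ} (Q : Cube n) : ℝ := ((2:ℝ)^Q.1)^n

/-- The non-cancellative signature `ε = (1,…,1)`. -/
def allOne (n : ℕ) : Fin n → Bool := fun _ => true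

/-- One-dimensional Haar functions on the dyadic interval `I = [2^k m, 2^k(m+1))`:
`h_I^0 = |I|^{-1/2} (1_{I₋} - 1_{I₊})` (for `e = false`) and `h_I^1 = |I|^{-1/2} 1_I`
(for `e = true`). -/
def haar1 (k m : ℤ) (e : Bool) (x : ℝ) : ℝ :=
  ((2:ℝ)^k) ^ (-(1/2) : ℝ) *
    (if e then Set.indicator (Set.Ico ((2:ℝ)^k * m) ((2:ℝ)^k * (m+1))) (fun _ => (1:ℝ)) x
     else Set.indicator (Set.Ico ((2:ℝ)^k * m) ((2:ℝ)^k * ((m : ℝ) + 1/2))) (fun _ => (1:ℝ)) x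
        - Set.indicator (Set.Ico ((2:ℝ)^k * ((m : ℝ) + 1/2)) ((2:ℝ)^k * (m+1))) (fun _ => (1:ℝ)) x)

/-- The Haar function `h_Q^ε = h_{I₁}^{ε₁} ⊗ ⋯ ⊗ h_{I_n}^{ε_n}` on a dyadic cube. -/
def haar {n : ℕ} (Q : Cube n) (ε : Fin n → Bool) (x : Fin n → ℝ) : ℝ :=
  ∏ i, haar1 Q.1 (Q.2 i) (ε i) (x i)

/-- The average `⟨f⟩_Q = |Q|⁻¹ ∫_Q f`. -/
def avg {n : ℕ} (f : (Fin n → ℝ) → ℝ) (Q : Cube n) : ℝ :=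
  (∫ x in cubeSet Q, f x) / vol Q

/-- The Haar coefficient `⟨f, h_Q^ε⟩`. -/
def haarCoef {n : ℕ} (f : (Fin n → ℝ) → ℝ) (Q : Cube n) (ε : Fin n → Bool) : ℝ :=
  ∫ x, f x * haar Q ε x

/-- The dyadic fractional integral `I_α^D f = Σ_Q |Q|^{α/n} ⟨f⟩_Q 1_Q`. -/
def Ialpha {n : ℕ} (α : ℝ) (f : (Fin n → ℝ) → ℝ) (x : Fin n → ℝ) : ℝ :=
  ∑' Q : Cube n, vol Q ^ (α / n) * avg f Q * (cubeSet Q).indicator (fun _ => (1:ℝ)) x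

/-- The bilinear dyadic fractional integral
`I_α^D(f₁,f₂) = Σ_Q |Q|^{α/n} ⟨f₁⟩_Q ⟨f₂⟩_Q 1_Q`. -/
def IalphaBil {n : ℕ} (α : ℝ) (f₁ f₂ : (Fin n → ℝ) → ℝ) (x : Fin n → ℝ) : ℝ :=
  ∑' Q : Cube n, vol Q ^ (α / n) * avg f₁ Q * avg f₂ Q * (cubeSet Q).indicator (fun _ => (1:ℝ)) x

/-- The constant `c_α = Σ_{j=1}^∞ 2^{-jα}`. -/
def calpha (α : ℝ) : ℝ := ∑' j : ℕ, (2:ℝ) ^ (-((j:ℝ)+1) * α)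

/-- The `k`-th dyadic ancestor `Q^{(k)}` of a dyadic cube. -/
def ancestor {n : ℕ} (k : ℕ) (Q : Cube n) : Cube n :=
  (Q.1 + k, fun i => Int.fdiv (Q.2 i) (2^k))

/-- The center of a dyadic cube (a convenient interior point of `Q`). -/
def center {n : ℕ} (Q : Cube n) : Fin n → ℝ := fun i => (2:ℝ)^Q.1 * ((Q.2 i : ℝ) + 1/2)

/-- An axis-parallel cube (box) of sidelength `l` with corner `a`. -/
def box {n : ℕ} (a : Fin n → ℝ) (l : ℝ) : Set (Fin n → ℝ) :=
  {x | ∀ i, a i ≤ x i ∧ x i < a i + l}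

end

/-- The dyadic square function (in `ℝ≥0∞` form):
`S_D f = (Σ_{I,ε≠1} |⟨f,h_I^ε⟩|² 1_I/|I|)^{1/2}`. -/
noncomputable def SD {n : ℕ} (f : (Fin n → ℝ) → ℝ) (x : Fin n → ℝ) : ℝ≥0∞ :=
  (∑' p : Cube n × (Fin n → Bool),
    if p.2 ≠ allOne n then
      ENNReal.ofReal ((haarCoef f p.1 p.2)^2) *
        (cubeSet p.1).indicator (fun _ => (ENNReal.ofReal (vol p.1))⁻¹) x
    else 0) ^ (1/2 : ℝ)

/-- The dyadic Hardy–Littlewood maximal function `Mf(x) = sup_{Q ∋ x} ⟨|f|⟩_Q`. -/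
noncomputable def Mdyadic {n : ℕ} (f : (Fin n → ℝ) → ℝ) (x : Fin n → ℝ) : ℝ≥0∞ :=
  ⨆ Q : Cube n, (cubeSet Q).indicator
    (fun _ => (∫⁻ y in cubeSet Q, ENNReal.ofReal |f y|) / ENNReal.ofReal (vol Q)) x

/-- The Haar coefficient of `Φ = Σ_{I,ε,η≠1} ⟨f,h_{I^{(k)}}^η⟩ h_{I^{(k)}}^η(I) ⟨g,h_I^ε⟩ h_I^ε`
at `(I,ε)`. -/
noncomputable def PhiCoef {n : ℕ} (k : ℕ) (f g : (Fin n → ℝ) → ℝ)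
    (p : Cube n × (Fin n → Bool)) : ℝ :=
  (∑ η ∈ Finset.univ.filter (fun η : Fin n → Bool => η ≠ allOne n),
      haarCoef f (ancestor k p.1) η * haar (ancestor k p.1) η (center p.1)) *
    haarCoef g p.1 p.2

section AuxLemmas

variable {n : ℕ}

lemma measurableSet_cubeSet (Q : Cube n) : MeasurableSet (cubeSet Q) := by
  have : cubeSet Q = ⋂ i, (fun x : Fin n → ℝ => x i) ⁻¹'
      (Set.Ico ((2:ℝ)^Q.1 * Q.2 i) ((2:ℝ)^Q.1 * (Q.2 i + 1))) := by
    ext x; simp [cubeSet, Set.mem_iInter, Set.mem_Ico]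
  rw [this]
  exact MeasurableSet.iInter fun i => (measurable_pi_apply i) measurableSet_Ico

lemma vol_pos (Q : Cube n) : 0 < vol Q := by
  unfold vol; positivity

lemma haar1_eq_zero {k m : ℤ} {e : Bool} {x : ℝ}
    (hx : x ∉ Set.Ico ((2:ℝ)^k * m) ((2:ℝ)^k * (m+1))) : haar1 k m e x = 0 := by
  have h2 : (0:ℝ) < (2:ℝ)^k := by positivity
  have hsub1 : Set.Ico ((2:ℝ)^k * m) ((2:ℝ)^k * ((m:ℝ) + 1/2)) ⊆
      Set.Ico ((2:ℝ)^k * m) ((2:ℝ)^k * (m+1)) :=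
    Set.Ico_subset_Ico le_rfl (by nlinarith)
  have hsub2 : Set.Ico ((2:ℝ)^k * ((m:ℝ) + 1/2)) ((2:ℝ)^k * (m+1)) ⊆
      Set.Ico ((2:ℝ)^k * m) ((2:ℝ)^k * (m+1)) :=
    Set.Ico_subset_Ico (by nlinarith) le_rfl
  have z1 : Set.indicator (Set.Ico ((2:ℝ)^k * m) ((2:ℝ)^k * ((m:ℝ) + 1/2)))
      (fun _ => (1:ℝ)) x = 0 := Set.indicator_of_notMem (fun h => hx (hsub1 h)) _
  have z2 : Set.indicator (Set.Ico ((2:ℝ)^k * ((m:ℝ) + 1/2)) ((2:ℝ)^k * (m+1)))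
      (fun _ => (1:ℝ)) x = 0 := Set.indicator_of_notMem (fun h => hx (hsub2 h)) _
  have z3 : Set.indicator (Set.Ico ((2:ℝ)^k * m) ((2:ℝ)^k * (m+1)))
      (fun _ => (1:ℝ)) x = 0 := Set.indicator_of_notMem hx _
  simp only [one_div] at z1 z2
  unfold haar1
  cases e <;> simp [z1, z2, z3]

lemma abs_ind_sub_ind_le (s t : Set ℝ) (x : ℝ) :
    |Set.indicator s (fun _ => (1:ℝ)) x - Set.indicator t (fun _ => (1:ℝ)) x| ≤ 1 := by
  by_cases hs : x ∈ s <;> by_cases ht : x ∈ t <;>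
    simp [Set.indicator_of_mem, Set.indicator_of_notMem, hs, ht]

lemma abs_haar1_le (k m : ℤ) (e : Bool) (x : ℝ) :
    |haar1 k m e x| ≤ ((2:ℝ)^k) ^ (-(1/2) : ℝ) *
      Set.indicator (Set.Ico ((2:ℝ)^k * m) ((2:ℝ)^k * (m+1))) (fun _ => (1:ℝ)) x := by
  have h2 : (0:ℝ) < (2:ℝ)^k := by positivity
  have hc : (0:ℝ) ≤ ((2:ℝ)^k) ^ (-(1/2):ℝ) := Real.rpow_nonneg h2.le _
  by_cases hx : x ∈ Set.Ico ((2:ℝ)^k * m) ((2:ℝ)^k * (m+1))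
  · rw [Set.indicator_of_mem hx, mul_one, haar1, abs_mul, abs_of_nonneg hc]
    cases e
    · simpa using mul_le_of_le_one_right hc (abs_ind_sub_ind_le _ _ _)
    · refine mul_le_of_le_one_right hc ?_
      simp only [if_true]
      by_cases h : x ∈ Set.Ico ((2:ℝ)^k * (m:ℝ)) ((2:ℝ)^k * ((m:ℝ)+1)) <;>
        simp [Set.indicator_of_mem, Set.indicator_of_notMem, h]
  · rw [Set.indicator_of_notMem hx, mul_zero, haar1_eq_zero hx, abs_zero]

lemma abs_haar_le (Q : Cube n) (η : Fin n → Bool) (x : Fin n → ℝ) :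
    |haar Q η x| ≤ vol Q ^ (-(1/2) : ℝ) *
      Set.indicator (cubeSet Q) (fun _ => (1:ℝ)) x := by
  have h2 : (0:ℝ) < (2:ℝ)^Q.1 := by positivity
  have hvol : vol Q ^ (-(1/2):ℝ) = (((2:ℝ)^Q.1) ^ (-(1/2):ℝ))^n := by
    rw [vol, ← Real.rpow_natCast ((2:ℝ)^Q.1) n, ← Real.rpow_natCast (((2:ℝ)^Q.1) ^ (-(1/2):ℝ)) n,
      ← Real.rpow_mul h2.le, ← Real.rpow_mul h2.le, mul_comm]
  by_cases hx : x ∈ cubeSet Q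
  · rw [Set.indicator_of_mem hx, mul_one, hvol, haar, Finset.abs_prod]
    calc ∏ i, |haar1 Q.1 (Q.2 i) (η i) (x i)|
        ≤ ∏ _i : Fin n, ((2:ℝ)^Q.1) ^ (-(1/2):ℝ) := by
          apply Finset.prod_le_prod (fun i _ => abs_nonneg _)
          intro i _
          have h := abs_haar1_le Q.1 (Q.2 i) (η i) (x i)
          rwa [Set.indicator_of_mem (Set.mem_Ico.mpr (hx i)), mul_one] at h
    _ = (((2:ℝ)^Q.1) ^ (-(1/2):ℝ))^n := by
          rw [Finset.prod_const, Finset.card_univ, Fintype.card_fin]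
  · obtain ⟨i, hi⟩ : ∃ i, x i ∉ Set.Ico ((2:ℝ)^Q.1 * Q.2 i) ((2:ℝ)^Q.1 * (Q.2 i + 1)) := by
      by_contra h
      push_neg at h
      exact hx (fun i => Set.mem_Ico.mp (h i))
    rw [Set.indicator_of_notMem hx, mul_zero, haar,
      Finset.prod_eq_zero (Finset.mem_univ i) (haar1_eq_zero hi), abs_zero]

lemma abs_haar_le' (Q : Cube n) (η : Fin n → Bool) (x : Fin n → ℝ) :
    |haar Q η x| ≤ vol Q ^ (-(1/2) : ℝ) := by
  refine (abs_haar_le Q η x).trans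
    (mul_le_of_le_one_right (Real.rpow_nonneg (vol_pos Q).le _) ?_)
  by_cases h : x ∈ cubeSet Q <;> simp [h]

lemma haar_eq_zero_of_not_mem {Q : Cube n} {η : Fin n → Bool} {x : Fin n → ℝ}
    (hx : x ∉ cubeSet Q) : haar Q η x = 0 := by
  have h := abs_haar_le Q η x
  rw [Set.indicator_of_notMem hx, mul_zero] at h
  exact abs_eq_zero.mp (le_antisymm h (abs_nonneg _))

lemma enn_haarCoef_le (f : (Fin n → ℝ) → ℝ) (Q : Cube n) (η : Fin n → Bool) :
    ENNReal.ofReal |haarCoef f Q η| ≤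
      ENNReal.ofReal (vol Q ^ (-(1/2):ℝ)) * ∫⁻ y in cubeSet Q, ENNReal.ofReal |f y| := by
  have step1 : ENNReal.ofReal |haarCoef f Q η| ≤
      ∫⁻ y, ENNReal.ofReal |f y * haar Q η y| := by
    calc ENNReal.ofReal |haarCoef f Q η| = ‖∫ y, f y * haar Q η y‖ₑ := by
          rw [haarCoef, ← Real.norm_eq_abs, ofReal_norm_eq_enorm]
    _ ≤ ∫⁻ y, ‖f y * haar Q η y‖ₑ := enorm_integral_le_lintegral_enorm _
    _ = ∫⁻ y, ENNReal.ofReal |f y * haar Q η y| := by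
          simp_rw [← Real.norm_eq_abs, ofReal_norm_eq_enorm]
  refine step1.trans ?_
  have step2 : ∀ y, ENNReal.ofReal |f y * haar Q η y| ≤
      (cubeSet Q).indicator
        (fun y => ENNReal.ofReal (vol Q ^ (-(1/2):ℝ)) * ENNReal.ofReal |f y|) y := by
    intro y
    by_cases hy : y ∈ cubeSet Q
    · rw [Set.indicator_of_mem hy, abs_mul,
        ← ENNReal.ofReal_mul (Real.rpow_nonneg (vol_pos Q).le _)]
      apply ENNReal.ofReal_le_ofReal
      calc |f y| * |haar Q η y| ≤ |f y| * vol Q ^ (-(1/2):ℝ) :=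
            mul_le_mul_of_nonneg_left (abs_haar_le' Q η y) (abs_nonneg _)
      _ = vol Q ^ (-(1/2):ℝ) * |f y| := mul_comm _ _
    · rw [Set.indicator_of_notMem hy]
      simp [haar_eq_zero_of_not_mem hy]
  calc ∫⁻ y, ENNReal.ofReal |f y * haar Q η y|
      ≤ ∫⁻ y, (cubeSet Q).indicator
          (fun y => ENNReal.ofReal (vol Q ^ (-(1/2):ℝ)) * ENNReal.ofReal |f y|) y :=
        lintegral_mono step2
  _ = ∫⁻ y in cubeSet Q, ENNReal.ofReal (vol Q ^ (-(1/2):ℝ)) * ENNReal.ofReal |f y| := by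
        rw [lintegral_indicator (measurableSet_cubeSet Q)]
  _ = ENNReal.ofReal (vol Q ^ (-(1/2):ℝ)) * ∫⁻ y in cubeSet Q, ENNReal.ofReal |f y| :=
        lintegral_const_mul' _ _ ENNReal.ofReal_ne_top

lemma cubeSet_subset_ancestor (k : ℕ) (I : Cube n) :
    cubeSet I ⊆ cubeSet (ancestor k I) := by
  intro x hx
  simp only [cubeSet, Set.mem_setOf_eq] at hx ⊢
  intro i
  have hb : (0:ℤ) < 2^k := by positivity
  set d : ℤ := Int.fdiv (I.2 i) (2^k) with hd
  have h1 : (2:ℤ)^k * d ≤ I.2 i ∧ I.2 i + 1 ≤ 2^k * (d + 1) := by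
    rw [hd, Int.fdiv_eq_ediv_of_nonneg _ hb.le]
    have e1 := Int.mul_ediv_add_emod (I.2 i) (2^k)
    have e2 := Int.emod_nonneg (I.2 i) (ne_of_gt hb)
    have e3 := Int.emod_lt_of_pos (I.2 i) hb
    constructor <;> nlinarith
  have hx' := hx i
  have hpj : (0:ℝ) < (2:ℝ)^I.1 := by positivity
  have hanc1 : (ancestor k I).1 = I.1 + (k:ℤ) := rfl
  have hanc2 : (ancestor k I).2 i = d := rfl
  have e1 : (2:ℝ)^((ancestor k I).1) = (2:ℝ)^I.1 * (2:ℝ)^(k:ℕ) := by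
    rw [hanc1, zpow_add₀ (by norm_num : (2:ℝ) ≠ 0), zpow_natCast]
  constructor
  · calc (2:ℝ)^((ancestor k I).1) * ((ancestor k I).2 i)
        = (2:ℝ)^I.1 * (((2:ℤ)^k * d : ℤ) : ℝ) := by rw [e1, hanc2]; push_cast; ring
    _ ≤ (2:ℝ)^I.1 * (I.2 i) := by
        apply mul_le_mul_of_nonneg_left _ hpj.le
        exact_mod_cast h1.1
    _ ≤ x i := hx'.1
  · calc x i < (2:ℝ)^I.1 * (I.2 i + 1) := hx'.2
    _ ≤ (2:ℝ)^I.1 * (((2:ℤ)^k * (d+1) : ℤ) : ℝ) := by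
        apply mul_le_mul_of_nonneg_left _ hpj.le
        exact_mod_cast h1.2
    _ = (2:ℝ)^((ancestor k I).1) * ((ancestor k I).2 i + 1) := by
        rw [e1, hanc2]; push_cast; ring

lemma ofReal_Asum_le (k : ℕ) (f : (Fin n → ℝ) → ℝ) (I : Cube n) (x : Fin n → ℝ)
    (hx : x ∈ cubeSet I) :
    ENNReal.ofReal |∑ η ∈ Finset.univ.filter (fun η : Fin n → Bool => η ≠ allOne n),
        haarCoef f (ancestor k I) η * haar (ancestor k I) η (center I)| ≤
      (2:ℝ≥0∞)^n * Mdyadic f x := by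
  set Q := ancestor k I with hQdef
  have hxQ : x ∈ cubeSet Q := cubeSet_subset_ancestor k I hx
  have hv : 0 < vol Q := vol_pos Q
  set L : ℝ≥0∞ := ∫⁻ y in cubeSet Q, ENNReal.ofReal |f y| with hL
  have key : ∀ η : Fin n → Bool,
      ENNReal.ofReal |haarCoef f Q η * haar Q η (center I)| ≤ Mdyadic f x := by
    intro η
    have h1 : ENNReal.ofReal |haarCoef f Q η * haar Q η (center I)| ≤
        (ENNReal.ofReal (vol Q ^ (-(1/2):ℝ)) * L) * ENNReal.ofReal (vol Q ^ (-(1/2):ℝ)) := by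
      rw [abs_mul, ENNReal.ofReal_mul (abs_nonneg _)]
      exact mul_le_mul (enn_haarCoef_le f Q η)
        (ENNReal.ofReal_le_ofReal (abs_haar_le' Q η (center I))) (by positivity) (by positivity)
    refine h1.trans ?_
    have h2 : ENNReal.ofReal (vol Q ^ (-(1/2):ℝ)) * ENNReal.ofReal (vol Q ^ (-(1/2):ℝ)) =
        (ENNReal.ofReal (vol Q))⁻¹ := by
      rw [← ENNReal.ofReal_mul (Real.rpow_nonneg hv.le _), ← Real.rpow_add hv,
        ← ENNReal.ofReal_inv_of_pos hv, ← Real.rpow_neg_one]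
      norm_num
    have h3 : (cubeSet Q).indicator
        (fun _ => (∫⁻ y in cubeSet Q, ENNReal.ofReal |f y|) / ENNReal.ofReal (vol Q)) x ≤
        Mdyadic f x := le_iSup (fun Q' : Cube n => (cubeSet Q').indicator
          (fun _ => (∫⁻ y in cubeSet Q', ENNReal.ofReal |f y|) / ENNReal.ofReal (vol Q')) x) Q
    rw [Set.indicator_of_mem hxQ] at h3
    calc (ENNReal.ofReal (vol Q ^ (-(1/2):ℝ)) * L) * ENNReal.ofReal (vol Q ^ (-(1/2):ℝ))
        = L * (ENNReal.ofReal (vol Q ^ (-(1/2):ℝ)) * ENNReal.ofReal (vol Q ^ (-(1/2):ℝ))) := by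
          ring
    _ = L / ENNReal.ofReal (vol Q) := by rw [h2, div_eq_mul_inv]
    _ ≤ Mdyadic f x := h3
  have hcard : (Finset.univ.filter (fun η : Fin n → Bool => η ≠ allOne n)).card ≤ 2^n := by
    refine le_trans (Finset.card_filter_le _ _) ?_
    simp [Fintype.card_fun]
  calc ENNReal.ofReal |∑ η ∈ Finset.univ.filter (fun η : Fin n → Bool => η ≠ allOne n),
        haarCoef f Q η * haar Q η (center I)|
      ≤ ENNReal.ofReal (∑ η ∈ Finset.univ.filter (fun η : Fin n → Bool => η ≠ allOne n),
          |haarCoef f Q η * haar Q η (center I)|) :=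
        ENNReal.ofReal_le_ofReal (Finset.abs_sum_le_sum_abs _ _)
  _ = ∑ η ∈ Finset.univ.filter (fun η : Fin n → Bool => η ≠ allOne n),
        ENNReal.ofReal |haarCoef f Q η * haar Q η (center I)| :=
        ENNReal.ofReal_sum_of_nonneg (fun _ _ => abs_nonneg _)
  _ ≤ ∑ _η ∈ Finset.univ.filter (fun η : Fin n → Bool => η ≠ allOne n), Mdyadic f x :=
        Finset.sum_le_sum (fun η _ => key η)
  _ = ((Finset.univ.filter (fun η : Fin n → Bool => η ≠ allOne n)).card : ℝ≥0∞) *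
        Mdyadic f x := by rw [Finset.sum_const, nsmul_eq_mul]
  _ ≤ (2:ℝ≥0∞)^n * Mdyadic f x := by
        apply mul_le_mul_left
        calc ((Finset.univ.filter (fun η : Fin n → Bool => η ≠ allOne n)).card : ℝ≥0∞)
            ≤ ((2^n : ℕ) : ℝ≥0∞) := by exact_mod_cast hcard
        _ = (2:ℝ≥0∞)^n := by push_cast; ring

end AuxLemmas

/-- pointwise, `S_D Φ ≤ C(n) (Mf) (S_D g)` for
`Φ = Σ_{I,ε,η≠1} ⟨f,h_{I^{(k)}}^η⟩ h_{I^{(k)}}^η(I) ⟨g,h_I^ε⟩ h_I^ε`. -/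
theorem statement17 (n : ℕ) :
    ∃ C : ℝ, 0 < C ∧ ∀ f g : (Fin n → ℝ) → ℝ, MemLp f 2 volume → MemLp g 2 volume →
      ∀ k : ℕ, 1 ≤ k → ∀ x : Fin n → ℝ,
        (∑' p : Cube n × (Fin n → Bool),
          if p.2 ≠ allOne n then
            ENNReal.ofReal ((PhiCoef k f g p)^2) *
              (cubeSet p.1).indicator (fun _ => (ENNReal.ofReal (vol p.1))⁻¹) x
          else 0) ^ (1/2 : ℝ)
        ≤ ENNReal.ofReal C * Mdyadic f x * SD g x := by
  refine ⟨2^n, by positivity, ?_⟩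
  intro f g _ _ k _ x
  have hC : ENNReal.ofReal ((2:ℝ)^n) = (2:ℝ≥0∞)^n := by
    rw [ENNReal.ofReal_pow (by norm_num)]
    norm_num
  set M := Mdyadic f x with hM
  set B := (2:ℝ≥0∞)^n * M with hB
  have hterm : ∀ p : Cube n × (Fin n → Bool),
      (if p.2 ≠ allOne n then
        ENNReal.ofReal ((PhiCoef k f g p)^2) *
          (cubeSet p.1).indicator (fun _ => (ENNReal.ofReal (vol p.1))⁻¹) x
      else 0)
      ≤ B^2 * (if p.2 ≠ allOne n then
        ENNReal.ofReal ((haarCoef g p.1 p.2)^2) *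
          (cubeSet p.1).indicator (fun _ => (ENNReal.ofReal (vol p.1))⁻¹) x
      else 0) := by
    intro p
    by_cases hp : p.2 ≠ allOne n
    · rw [if_pos hp, if_pos hp]
      by_cases hxp : x ∈ cubeSet p.1
      · have hA := ofReal_Asum_le k f p.1 x hxp
        rw [PhiCoef, mul_pow, ENNReal.ofReal_mul (by positivity)]
        have hA2 : ENNReal.ofReal ((∑ η ∈ Finset.univ.filter
            (fun η : Fin n → Bool => η ≠ allOne n),
            haarCoef f (ancestor k p.1) η * haar (ancestor k p.1) η (center p.1))^2) ≤
            B^2 := by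
          rw [← sq_abs, ENNReal.ofReal_pow (abs_nonneg _)]
          exact pow_le_pow_left' hA 2
        rw [mul_assoc]
        exact mul_le_mul_left hA2 _
      · simp [Set.indicator_of_notMem hxp]
    · rw [if_neg hp, if_neg hp, mul_zero]
  calc (∑' p : Cube n × (Fin n → Bool),
        if p.2 ≠ allOne n then
          ENNReal.ofReal ((PhiCoef k f g p)^2) *
            (cubeSet p.1).indicator (fun _ => (ENNReal.ofReal (vol p.1))⁻¹) x
        else 0) ^ (1/2 : ℝ)
      ≤ (∑' p : Cube n × (Fin n → Bool),
          B^2 * (if p.2 ≠ allOne n then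
            ENNReal.ofReal ((haarCoef g p.1 p.2)^2) *
              (cubeSet p.1).indicator (fun _ => (ENNReal.ofReal (vol p.1))⁻¹) x
          else 0)) ^ (1/2 : ℝ) :=
        ENNReal.rpow_le_rpow (ENNReal.tsum_le_tsum hterm) (by norm_num)
  _ = (B^2 * ∑' p : Cube n × (Fin n → Bool),
        (if p.2 ≠ allOne n then
          ENNReal.ofReal ((haarCoef g p.1 p.2)^2) *
            (cubeSet p.1).indicator (fun _ => (ENNReal.ofReal (vol p.1))⁻¹) x
        else 0)) ^ (1/2 : ℝ) := by rw [ENNReal.tsum_mul_left]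
  _ = (B^2) ^ (1/2 : ℝ) * SD g x := by
        rw [ENNReal.mul_rpow_of_nonneg _ _ (by norm_num : (0:ℝ) ≤ 1/2), SD]
  _ = B * SD g x := by
        congr 1
        rw [← ENNReal.rpow_natCast B 2, ← ENNReal.rpow_mul]
        norm_num
  _ = ENNReal.ofReal (2^n) * M * SD g x := by rw [hC, hB, mul_assoc]
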